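/- arXiv:1002.3807 — 4 statements merged into one kernel-verified Lean document; each statement's English description precedes it below -/
import Mathlib

section
/- For every α > 1 there exists δ_α ∈ (0,1) such that for all x₁, x₂ with 0 < x₁, x₂ < α and |x₁ - x₂| < δ < δ_α, one has |x₁·log x₁ - x₂·log x₂| < |δ·log δ|. -/
open Real

lemma gmono_aux : StrictMonoOn (fun x : ℝ => -(x * Real.log x)) (Set.Icc 0 (Real.exp (-1))) := by
  have : StrictMonoOn Real.negMulLog (Set.Icc 0 (Real.exp (-1))) := by
    apply strictMonoOn_of_deriv_pos (convex_Icc _ _) Real.continuous_negMulLog.continuousOn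
    intro x hx
    rw [interior_Icc, Set.mem_Ioo] at hx
    rw [Real.deriv_negMulLog (ne_of_gt hx.1)]
    have : Real.log x < -1 := by
      have := Real.log_lt_log hx.1 hx.2
      rwa [Real.log_exp] at this
    linarith
  simpa [Real.negMulLog_eq_neg] using this

theorem key_technical_lemma :
    ∀ α : ℝ, 1 < α → ∃ δα : ℝ, 0 < δα ∧ δα < 1 ∧
      ∀ x₁ x₂ δ : ℝ, 0 < x₁ → x₁ < α → 0 < x₂ → x₂ < α →
        |x₁ - x₂| < δ → δ < δα →
        |x₁ * Real.log x₁ - x₂ * Real.log x₂| < |δ * Real.log δ| := by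
  intro α hα
  have hlogα : 0 < Real.log α := Real.log_pos hα
  refine ⟨Real.exp (-(1 + Real.log α)), Real.exp_pos _, ?_, ?_⟩
  · exact Real.exp_lt_one_iff.mpr (by linarith)
  intro x₁ x₂ δ hx₁ hx₁α hx₂ hx₂α hdist hδ
  have hδpos : 0 < δ := lt_of_le_of_lt (abs_nonneg _) hdist
  have hδe : δ < Real.exp (-1) := lt_of_lt_of_le hδ (Real.exp_le_exp.mpr (by linarith))
  have hlogδ : Real.log δ < -(1 + Real.log α) := by
    have := Real.log_lt_log hδpos hδ
    rwa [Real.log_exp] at this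
  have hlogδneg : Real.log δ < 0 := by linarith
  have hRHS : |δ * Real.log δ| = -(δ * Real.log δ) :=
    abs_of_neg (mul_neg_of_pos_of_neg hδpos hlogδneg)
  rw [hRHS]
  -- main claim for ordered pair
  have main : ∀ x y : ℝ, 0 < x → y < α → x ≤ y → y - x < δ →
      δ * Real.log δ < y * Real.log y - x * Real.log x ∧
      y * Real.log y - x * Real.log x < -(δ * Real.log δ) := by
    intro x y hx hyα hxy hyxδ
    have hy : 0 < y := lt_of_lt_of_le hx hxy
    set t := y - x with ht
    have htnn : 0 ≤ t := by simp [ht]; linarith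
    have key : y * Real.log y - x * Real.log x
        = x * (Real.log y - Real.log x) + t * Real.log y := by rw [ht]; ring
    constructor
    · -- lower bound
      have h1 : 0 ≤ x * (Real.log y - Real.log x) := by
        apply mul_nonneg (le_of_lt hx)
        have := Real.log_le_log hx hxy
        linarith
      rw [key]
      have h2 : δ * Real.log δ < t * Real.log y := by
        rcases le_or_gt 0 (Real.log y) with hly | hly
        · have : 0 ≤ t * Real.log y := mul_nonneg htnn hly
          nlinarith [mul_neg_of_pos_of_neg hδpos hlogδneg]
        · rcases le_or_gt δ y with hyδ | hyδ
          · -- y ≥ δ : t * log y > δ * log y ≥ δ * log δ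
            have ha : δ * Real.log y < t * Real.log y ∨ t * Real.log y = δ * Real.log y := by
              rcases lt_or_eq_of_le (le_of_lt hyxδ) with h | h
              · left; exact mul_lt_mul_of_neg_right (by linarith) hly
              · right; rw [h]
            have hb : δ * Real.log δ ≤ δ * Real.log y :=
              mul_le_mul_of_nonneg_left (Real.log_le_log hδpos hyδ) (le_of_lt hδpos)
            rcases ha with h | h
            · linarith
            · rw [h]
              have hty : t < y := by rw [ht]; linarith
              have hδy : δ < y := by
                have : t = δ := mul_right_cancel₀ (ne_of_lt hly) h
                linarith
              have : Real.log δ < Real.log y := Real.log_lt_log hδpos hδy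
              nlinarith
          · -- y < δ ≤ exp(-1): use monotonicity of -(x log x)
            have ht' : t < y := by rw [ht]; linarith
            have hg : -(y * Real.log y) < -(δ * Real.log δ) := by
              apply gmono_aux (Set.mem_Icc.mpr ⟨le_of_lt hy, le_of_lt (hyδ.trans hδe)⟩)
                (Set.mem_Icc.mpr ⟨le_of_lt hδpos, le_of_lt hδe⟩) hyδ
            have : y * Real.log y ≤ t * Real.log y :=
              mul_le_mul_of_nonpos_right (le_of_lt ht') (le_of_lt hly)
            linarith
      linarith
    · -- upper bound
      rw [key]
      have h1 : x * (Real.log y - Real.log x) ≤ t := by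
        have hd : Real.log y - Real.log x = Real.log (y / x) := (Real.log_div (ne_of_gt hy) (ne_of_gt hx)).symm
        rw [hd]
        have := Real.log_le_sub_one_of_pos (div_pos hy hx)
        calc x * Real.log (y / x) ≤ x * (y / x - 1) := mul_le_mul_of_nonneg_left this (le_of_lt hx)
          _ = t := by field_simp; rw [ht]
      have h2 : t * Real.log y ≤ t * Real.log α :=
        mul_le_mul_of_nonneg_left (Real.log_le_log hy (le_of_lt hyα)) htnn
      have h3 : t * (1 + Real.log α) < δ * (1 + Real.log α) :=
        mul_lt_mul_of_pos_right hyxδ (by linarith)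
      have h4 : δ * (1 + Real.log α) < δ * (-Real.log δ) :=
        mul_lt_mul_of_pos_left (by linarith) hδpos
      nlinarith
  rcases le_total x₁ x₂ with h | h
  · have := main x₁ x₂ hx₁ hx₂α h (by rwa [abs_sub_comm, abs_of_nonneg (by linarith)] at hdist)
    rw [abs_lt]; constructor <;> linarith [this.1, this.2]
  · have := main x₂ x₁ hx₂ hx₁α h (by rwa [abs_of_nonneg (by linarith)] at hdist)
    rw [abs_lt]; constructor <;> linarith [this.1, this.2]
end

section
/- The Shannon entropy S is near-continuous on every compact K ⊂ ℝ: for every ε > 0 there exists δ > 0 such that for any two probability density functions f, g supported on K with ess sup |f - g| < δ (and with f·log f and g·log g integrable), |S(f) - S(g)| < ε. -/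
open MeasureTheory Real ENNReal

-- |t log t| ≤ 2√t for 0 ≤ t ≤ 1
lemma abs_mul_log_le_two_sqrt (t : ℝ) (h0 : 0 ≤ t) (h1 : t ≤ 1) :
    |t * Real.log t| ≤ 2 * Real.sqrt t := by
  rcases eq_or_lt_of_le h0 with h | h
  · simp [← h]
  · have hst : 0 < Real.sqrt t := Real.sqrt_pos.2 h
    have hlog : Real.log t ≤ 0 := Real.log_nonpos h0 h1
    have habs : |t * Real.log t| = t * (-Real.log t) := by
      rw [abs_mul, abs_of_nonneg h0, abs_of_nonpos hlog]
    have hls : Real.log (Real.sqrt t) = Real.log t / 2 := Real.log_sqrt h0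
    have h3 : Real.log (Real.sqrt t)⁻¹ ≤ (Real.sqrt t)⁻¹ - 1 :=
      Real.log_le_sub_one_of_pos (inv_pos.2 hst)
    rw [Real.log_inv, hls] at h3
    have hneg : -Real.log t ≤ 2 * (Real.sqrt t)⁻¹ := by linarith
    have hts : t / Real.sqrt t = Real.sqrt t := Real.div_sqrt
    calc |t * Real.log t| = t * (-Real.log t) := habs
      _ ≤ t * (2 * (Real.sqrt t)⁻¹) := by
          exact mul_le_mul_of_nonneg_left hneg h0
      _ = 2 * (t / Real.sqrt t) := by ring
      _ = 2 * Real.sqrt t := by rw [hts]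

lemma key_half (δ a b : ℝ) (hδ0 : 0 < δ) (hδ1 : δ ≤ 1) (ha : 0 ≤ a) (hb : 0 ≤ b)
    (hba : b ≤ a) (hab : a - b ≤ δ) :
    |a * Real.log a - b * Real.log b| ≤
      4 * Real.sqrt (Real.sqrt δ) + 2 * (δ / Real.sqrt (Real.sqrt δ)) + δ + δ * (a + b) := by
  set t := Real.sqrt (Real.sqrt δ) with ht_def
  have hsδ0 : 0 < Real.sqrt δ := Real.sqrt_pos.2 hδ0
  have ht0 : 0 < t := Real.sqrt_pos.2 hsδ0
  have hsδ1 : Real.sqrt δ ≤ 1 := by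
    rw [show (1:ℝ) = Real.sqrt 1 by simp]
    exact Real.sqrt_le_sqrt hδ1
  have hδs : δ ≤ Real.sqrt δ := by
    nlinarith [Real.sq_sqrt hδ0.le, Real.sqrt_nonneg δ]
  have hsδt : Real.sqrt δ ≤ t := by
    nlinarith [Real.sq_sqrt hsδ0.le, Real.sqrt_nonneg (Real.sqrt δ)]
  have ht2 : t ^ 2 = Real.sqrt δ := Real.sq_sqrt hsδ0.le
  have hdt : δ / t ≤ t := by
    rw [div_le_iff₀ ht0]
    nlinarith
  have hnn : 0 ≤ 2 * (δ / t) + δ + δ * (a + b) := by positivity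
  rcases le_or_gt a (Real.sqrt δ) with hcase | hcase
  · -- both a, b small
    have ha1 : a ≤ 1 := hcase.trans hsδ1
    have hb1 : b ≤ 1 := hba.trans ha1
    have h1 := abs_mul_log_le_two_sqrt a ha ha1
    have h2 := abs_mul_log_le_two_sqrt b hb hb1
    have hsa : Real.sqrt a ≤ t := Real.sqrt_le_sqrt hcase
    have hsb : Real.sqrt b ≤ t := Real.sqrt_le_sqrt (hba.trans hcase)
    calc |a * Real.log a - b * Real.log b| ≤ |a * Real.log a| + |b * Real.log b| :=
          abs_sub _ _
      _ ≤ 2 * Real.sqrt a + 2 * Real.sqrt b := by linarith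
      _ ≤ 4 * t := by linarith
      _ ≤ 4 * t + (2 * (δ / t) + δ + δ * (a + b)) := by linarith
      _ = 4 * t + 2 * (δ / t) + δ + δ * (a + b) := by ring
  · -- a > √δ
    have ha0 : 0 < a := hsδ0.trans hcase
    have hb0 : 0 < b := by
      rcases eq_or_lt_of_le hb with h | h
      · exfalso; rw [← h] at hba hab; linarith
      · exact h
    have hlogdiff : Real.log a - Real.log b = Real.log (a / b) :=
      (Real.log_div ha0.ne' hb0.ne').symm
    have hmid : 0 ≤ b * (Real.log a - Real.log b) ∧ b * (Real.log a - Real.log b) ≤ δ := by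
      constructor
      · have : Real.log b ≤ Real.log a := Real.log_le_log hb0 hba
        nlinarith
      · have h4 : Real.log (a / b) ≤ a / b - 1 :=
          Real.log_le_sub_one_of_pos (div_pos ha0 hb0)
        have : b * Real.log (a / b) ≤ b * (a / b - 1) :=
          mul_le_mul_of_nonneg_left h4 hb0.le
        rw [hlogdiff]
        have hbab : b * (a / b - 1) = a - b := by field_simp
        linarith
    have hdecomp : a * Real.log a - b * Real.log b =
        (a - b) * Real.log a + b * (Real.log a - Real.log b) := by ring
    have habs1 : |(a - b) * Real.log a| ≤ δ * |Real.log a| := by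
      rw [abs_mul, abs_of_nonneg (by linarith : (0:ℝ) ≤ a - b)]
      exact mul_le_mul_of_nonneg_right hab (abs_nonneg _)
    have hlogbound : δ * |Real.log a| ≤ 2 * (δ / t) + δ * (a + b) := by
      rcases le_or_gt 1 a with h1a | h1a
      · have : |Real.log a| = Real.log a := abs_of_nonneg (Real.log_nonneg h1a)
        have h5 : Real.log a ≤ a - 1 := Real.log_le_sub_one_of_pos ha0
        rw [this]
        have : δ * Real.log a ≤ δ * a := by nlinarith
        have hpos : 0 ≤ 2 * (δ / t) := by positivity
        nlinarith
      · have hlneg : Real.log a ≤ 0 := Real.log_nonpos ha0.le h1a.le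
        have habsl : |Real.log a| = -Real.log a := abs_of_nonpos hlneg
        have hsa : t < Real.sqrt a := by
          rw [ht_def]; exact Real.sqrt_lt_sqrt hsδ0.le hcase
        have hsa0 : 0 < Real.sqrt a := ht0.trans hsa
        have hls : Real.log (Real.sqrt a) = Real.log a / 2 := Real.log_sqrt ha0.le
        have h3 : Real.log (Real.sqrt a)⁻¹ ≤ (Real.sqrt a)⁻¹ - 1 :=
          Real.log_le_sub_one_of_pos (inv_pos.2 hsa0)
        rw [Real.log_inv, hls] at h3
        have hneg : -Real.log a ≤ 2 * (Real.sqrt a)⁻¹ := by linarith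
        have hinv : (Real.sqrt a)⁻¹ ≤ t⁻¹ := by
          apply inv_anti₀ ht0 hsa.le
        have : δ * (-Real.log a) ≤ δ * (2 * t⁻¹) := by
          apply mul_le_mul_of_nonneg_left _ hδ0.le
          calc -Real.log a ≤ 2 * (Real.sqrt a)⁻¹ := hneg
            _ ≤ 2 * t⁻¹ := by linarith
        rw [habsl]
        have heq : δ * (2 * t⁻¹) = 2 * (δ / t) := by field_simp
        have hpos : 0 ≤ δ * (a + b) := by positivity
        linarith
    calc |a * Real.log a - b * Real.log b|
        = |(a - b) * Real.log a + b * (Real.log a - Real.log b)| := by rw [hdecomp]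
      _ ≤ |(a - b) * Real.log a| + |b * (Real.log a - Real.log b)| := abs_add_le _ _
      _ = |(a - b) * Real.log a| + b * (Real.log a - Real.log b) := by
          rw [abs_of_nonneg hmid.1]
      _ ≤ δ * |Real.log a| + δ := by linarith [habs1, hmid.2]
      _ ≤ 2 * (δ / t) + δ * (a + b) + δ := by linarith [hlogbound]
      _ ≤ 4 * t + 2 * (δ / t) + δ + δ * (a + b) := by nlinarith [ht0]

lemma key_full (δ a b : ℝ) (hδ0 : 0 < δ) (hδ1 : δ ≤ 1) (ha : 0 ≤ a) (hb : 0 ≤ b)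
    (hab : |a - b| ≤ δ) :
    |a * Real.log a - b * Real.log b| ≤
      4 * Real.sqrt (Real.sqrt δ) + 2 * (δ / Real.sqrt (Real.sqrt δ)) + δ + δ * (a + b) := by
  rcases le_total b a with h | h
  · exact key_half δ a b hδ0 hδ1 ha hb h (by rw [abs_of_nonneg (by linarith)] at hab; linarith)
  · have := key_half δ b a hδ0 hδ1 hb ha h
      (by rw [abs_sub_comm, abs_of_nonneg (by linarith)] at hab; linarith)
    rw [abs_sub_comm] at this
    linarith [this]

theorem entropy_near_continuous_on_compact (K : Set ℝ) (hK : IsCompact K) :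
    ∀ ε : ℝ, 0 < ε → ∃ δ : ℝ, 0 < δ ∧
      ∀ f g : ℝ → ℝ,
        (∀ x, 0 ≤ f x) → (∀ x, 0 ≤ g x) →
        Integrable f → Integrable g →
        (∫ x, f x) = 1 → (∫ x, g x) = 1 →
        (∀ x, x ∉ K → f x = 0) → (∀ x, x ∉ K → g x = 0) →
        Integrable (fun x => f x * Real.log (f x)) →
        Integrable (fun x => g x * Real.log (g x)) →
        essSup (fun x => (‖f x - g x‖₊ : ℝ≥0∞)) volume < ENNReal.ofReal δ →
        |(-∫ x, f x * Real.log (f x)) - (-∫ x, g x * Real.log (g x))| < ε := by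
  intro ε hε
  set V := (volume K).toReal with hV_def
  have hV : 0 ≤ V := ENNReal.toReal_nonneg
  set A : ℝ := 7 * V + 2 with hA_def
  have hA : 0 < A := by positivity
  refine ⟨min 1 ((ε / (2 * A)) ^ 4), lt_min one_pos (by positivity), ?_⟩
  set δ := min 1 ((ε / (2 * A)) ^ 4) with hδ_def
  have hδ0 : 0 < δ := lt_min one_pos (by positivity)
  have hδ1 : δ ≤ 1 := min_le_left _ _
  set t := Real.sqrt (Real.sqrt δ) with ht_def
  have ht0 : 0 < t := Real.sqrt_pos.2 (Real.sqrt_pos.2 hδ0)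
  have htε : t ≤ ε / (2 * A) := by
    have h4 : δ ≤ (ε / (2 * A)) ^ 4 := min_le_right _ _
    have hεA : 0 ≤ ε / (2 * A) := by positivity
    have : Real.sqrt δ ≤ (ε / (2 * A)) ^ 2 := by
      have : Real.sqrt δ ≤ Real.sqrt ((ε / (2 * A)) ^ 4) := Real.sqrt_le_sqrt h4
      rwa [show ((ε / (2*A)) ^ 4) = ((ε / (2*A)) ^ 2) ^ 2 by ring,
        Real.sqrt_sq (by positivity)] at this
    calc t ≤ Real.sqrt ((ε / (2 * A)) ^ 2) := Real.sqrt_le_sqrt this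
      _ = ε / (2 * A) := Real.sqrt_sq hεA
  -- facts about δ, t
  have hsδ0 : 0 < Real.sqrt δ := Real.sqrt_pos.2 hδ0
  have hδs : δ ≤ Real.sqrt δ := by
    nlinarith [Real.sq_sqrt hδ0.le, Real.sqrt_nonneg δ, Real.sqrt_le_sqrt hδ1,
      Real.sqrt_one]
  have hsδt : Real.sqrt δ ≤ t := by
    have hsδ1 : Real.sqrt δ ≤ 1 := by
      rw [show (1:ℝ) = Real.sqrt 1 by simp]; exact Real.sqrt_le_sqrt hδ1
    nlinarith [Real.sq_sqrt hsδ0.le, Real.sqrt_nonneg (Real.sqrt δ)]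
  have hdt : δ / t ≤ t := by
    rw [div_le_iff₀ ht0]
    nlinarith [Real.sq_sqrt hsδ0.le]
  set M : ℝ := 4 * t + 2 * (δ / t) + δ with hM_def
  have hM0 : 0 ≤ M := by positivity
  have hM7 : M ≤ 7 * t := by
    have : δ ≤ t := hδs.trans hsδt
    simp only [hM_def]; linarith
  intro f g hf hg hfi hgi hf1 hg1 hfK hgK hφf hφg hess
  -- a.e. bound on |f - g|
  have hae : ∀ᵐ x : ℝ, |f x - g x| ≤ δ := by
    have h1 : ∀ᵐ x : ℝ, (‖f x - g x‖₊ : ℝ≥0∞) ≤ essSup (fun x => (‖f x - g x‖₊ : ℝ≥0∞)) volume :=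
      ENNReal.ae_le_essSup (fun x => (‖f x - g x‖₊ : ℝ≥0∞))
    filter_upwards [h1] with x hx
    have h2 : (‖f x - g x‖₊ : ℝ≥0∞) < ENNReal.ofReal δ := lt_of_le_of_lt hx hess
    rw [ENNReal.ofReal, ENNReal.coe_lt_coe] at h2
    have h3 : ‖f x - g x‖ < δ := by
      have := (NNReal.coe_lt_coe).2 h2
      rwa [coe_nnnorm, Real.coe_toNNReal δ hδ0.le] at this
    rw [Real.norm_eq_abs] at h3
    exact h3.le
  set bound : ℝ → ℝ := fun x => K.indicator (fun _ => M) x + δ * (f x + g x) with hbound_def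
  have hKm : MeasurableSet K := hK.measurableSet
  have hind_int : Integrable (K.indicator (fun _ => M)) := by
    rw [integrable_indicator_iff hKm]
    exact integrableOn_const hK.measure_lt_top.ne (by simp)
  have h2int : Integrable (fun x => δ * (f x + g x)) := by
    simpa using ((hfi.add hgi).const_mul δ)
  have hbound_int : Integrable bound := hind_int.add h2int
  have hptw : ∀ᵐ x : ℝ, |f x * Real.log (f x) - g x * Real.log (g x)| ≤ bound x := by
    filter_upwards [hae] with x hx
    by_cases hxK : x ∈ K
    · have := key_full δ (f x) (g x) hδ0 hδ1 (hf x) (hg x) hx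
      simp only [hbound_def, Set.indicator_of_mem hxK, hM_def]
      linarith
    · simp only [hbound_def, Set.indicator_of_notMem hxK, hfK x hxK, hgK x hxK]
      norm_num
  have hdiff_int : Integrable (fun x => f x * Real.log (f x) - g x * Real.log (g x)) :=
    hφf.sub hφg
  have hstep1 : |(-∫ x, f x * Real.log (f x)) - (-∫ x, g x * Real.log (g x))|
      ≤ ∫ x, bound x := by
    have he : (-∫ x, f x * Real.log (f x)) - (-∫ x, g x * Real.log (g x))
        = -(∫ x, (f x * Real.log (f x) - g x * Real.log (g x))) := by
      rw [integral_sub hφf hφg]; ring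
    rw [he, abs_neg]
    calc |∫ x, (f x * Real.log (f x) - g x * Real.log (g x))|
        ≤ ∫ x, |f x * Real.log (f x) - g x * Real.log (g x)| := by
          simpa [Real.norm_eq_abs] using norm_integral_le_integral_norm
            (fun x => f x * Real.log (f x) - g x * Real.log (g x))
      _ ≤ ∫ x, bound x := integral_mono_ae hdiff_int.abs hbound_int hptw
  have hbound_val : (∫ x, bound x) = M * V + 2 * δ := by
    have e1 : (∫ x, bound x) = (∫ x, K.indicator (fun _ => M) x) + ∫ x, δ * (f x + g x) :=
      integral_add hind_int h2int
    rw [e1, integral_indicator_const _ hKm, integral_const_mul,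
      integral_add hfi hgi, hf1, hg1]
    simp [hV_def, smul_eq_mul, Measure.real]
    ring
  have hfin : M * V + 2 * δ ≤ t * A := by
    have h1 : M * V ≤ 7 * t * V := mul_le_mul_of_nonneg_right hM7 hV
    have h2 : δ ≤ t := hδs.trans hsδt
    simp only [hA_def]; nlinarith
  have htA : t * A ≤ ε / 2 := by
    calc t * A ≤ (ε / (2 * A)) * A := mul_le_mul_of_nonneg_right htε hA.le
      _ = ε / 2 := by field_simp
  rw [hbound_val] at hstep1
  refine lt_of_le_of_lt hstep1 ?_
  have h9 : M * V + 2 * δ ≤ ε / 2 := le_trans hfin htA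
  clear_value M t δ A V
  linarith
end

section
/- Let p(x) = (1/x)·𝟙_B(x) where B is a countable union of disjoint intervals in (0,∞) with ∫_B (1/x) dx = 1, and let A = log(B), f(x) = μ({y > x : y ∈ A}) for x > 0 and f(x) = -μ({y < x : y ∈ A}) for x < 0. Then -∫_1^∞ p(x)·log p(x) dx = ∫_0^∞ f(x) dx and -∫_0^1 p(x)·log p(x) dx = ∫_{-∞}^0 f(x) dx, whenever the relevant integrals exist (possibly infinite). -/
open MeasureTheory Real ENNReal

lemma log_image_volume {S : Set ℝ} (hS : MeasurableSet S) (hsub : S ⊆ Set.Ioi (0:ℝ)) :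
    volume (Real.log '' S) = ∫⁻ y in S, ENNReal.ofReal y⁻¹ := by
  have hderiv : ∀ x ∈ S, HasFDerivWithinAt Real.log
      ((1 : ℝ →L[ℝ] ℝ).smulRight x⁻¹) S x := fun x hx =>
    ((Real.hasDerivAt_log (ne_of_gt (hsub hx))).hasDerivWithinAt).hasFDerivWithinAt
  have h := MeasureTheory.lintegral_image_eq_lintegral_abs_det_fderiv_mul volume hS hderiv
    (Real.log_injOn_pos.mono hsub) (fun _ => 1)
  simp only [ContinuousLinearMap.det_smulRight, ContinuousLinearMap.one_apply, one_mul, mul_one] at h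
  rw [setLIntegral_one] at h
  rw [h]
  refine setLIntegral_congr_fun hS (fun x hx => ?_)
  rw [abs_of_pos (inv_pos.mpr (hsub hx))]

theorem entropy_integrals_eq_tail_integrals (B : Set ℝ) (p : ℝ → ℝ)
    (hB : MeasurableSet B) (hBsub : B ⊆ Set.Ioi (0 : ℝ))
    (hp : p = B.indicator fun x => x⁻¹)
    (hdens : (∫⁻ x in B, ENNReal.ofReal x⁻¹) = 1) :
    (∫⁻ x in Set.Ioi (1 : ℝ), ENNReal.ofReal (-(p x * Real.log (p x))) =
        ∫⁻ x in Set.Ioi (0 : ℝ), volume ((Real.log '' B) ∩ Set.Ioi x)) ∧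
    (∫⁻ x in Set.Ioo (0 : ℝ) 1, ENNReal.ofReal (p x * Real.log (p x)) =
        ∫⁻ x in Set.Iio (0 : ℝ), volume ((Real.log '' B) ∩ Set.Iio x)) := by
  classical
  constructor
  · -- Part 1
    have himg : ∀ t : ℝ, Real.log '' B ∩ Set.Ioi t = Real.log '' (B ∩ Set.Ioi (Real.exp t)) := by
      intro t
      ext z
      constructor
      · rintro ⟨⟨y, hyB, rfl⟩, hz⟩
        exact ⟨y, ⟨hyB, (Real.lt_log_iff_exp_lt (hBsub hyB)).1 hz⟩, rfl⟩
      · rintro ⟨y, ⟨hyB, hy⟩, rfl⟩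
        exact ⟨⟨y, hyB, rfl⟩, (Real.lt_log_iff_exp_lt (hBsub hyB)).2 hy⟩
    set f : ℝ → ℝ → ℝ≥0∞ := fun x y =>
      Set.indicator {q : ℝ × ℝ | q.2 ∈ B ∧ Real.exp q.1 < q.2}
        (fun q => ENNReal.ofReal q.2⁻¹) (x, y) with hfdef
    have hset : MeasurableSet {q : ℝ × ℝ | q.2 ∈ B ∧ Real.exp q.1 < q.2} := by
      exact (measurable_snd hB).inter
        (measurableSet_lt (Real.continuous_exp.comp continuous_fst).measurable measurable_snd)
    have hFm : Measurable (Function.uncurry f) :=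
      Measurable.indicator (measurable_snd.inv.ennreal_ofReal) hset
    have step1 : ∫⁻ x in Set.Ioi (0:ℝ), volume ((Real.log '' B) ∩ Set.Ioi x)
        = ∫⁻ x in Set.Ioi (0:ℝ), ∫⁻ y, f x y := by
      refine setLIntegral_congr_fun measurableSet_Ioi
        (fun x _ => ?_)
      rw [himg x, log_image_volume (hB.inter measurableSet_Ioi)
        ((Set.inter_subset_left).trans hBsub),
        ← lintegral_indicator (hB.inter measurableSet_Ioi)]
      refine lintegral_congr fun y => ?_
      simp only [hfdef, Set.indicator_apply, Set.mem_setOf_eq, Set.mem_inter_iff, Set.mem_Ioi]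
    have step2 : ∫⁻ x in Set.Ioi (0:ℝ), ∫⁻ y, f x y = ∫⁻ y, ∫⁻ x in Set.Ioi (0:ℝ), f x y :=
      lintegral_lintegral_swap hFm.aemeasurable
    have step3 : ∀ y : ℝ, (∫⁻ x in Set.Ioi (0:ℝ), f x y)
        = (Set.Ioi (1:ℝ)).indicator (fun y => ENNReal.ofReal (-(p y * Real.log (p y)))) y := by
      intro y
      by_cases hyB : y ∈ B
      · have hy0 : 0 < y := hBsub hyB
        have hfx : ∀ x, f x y = (Set.Iio (Real.log y)).indicator
            (fun _ => ENNReal.ofReal y⁻¹) x := by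
          intro x
          simp only [hfdef, Set.indicator_apply, Set.mem_setOf_eq, Set.mem_Iio,
            ← Real.lt_log_iff_exp_lt hy0, hyB, true_and]
        have hinner : (∫⁻ x in Set.Ioi (0:ℝ), f x y)
            = ENNReal.ofReal y⁻¹ * ENNReal.ofReal (Real.log y) := by
          simp only [hfx]
          rw [lintegral_indicator_const measurableSet_Iio,
            Measure.restrict_apply measurableSet_Iio, Set.Iio_inter_Ioi, Real.volume_Ioo,
            sub_zero]
        rw [hinner]
        by_cases hy1 : 1 < y
        · rw [Set.indicator_of_mem (Set.mem_Ioi.mpr hy1), hp, Set.indicator_of_mem hyB,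
            Real.log_inv, mul_neg, neg_neg, ENNReal.ofReal_mul (inv_nonneg.mpr hy0.le)]
        · rw [Set.indicator_of_notMem (fun h => hy1 (Set.mem_Ioi.mp h)),
            ENNReal.ofReal_eq_zero.2 (Real.log_nonpos hy0.le (not_lt.1 hy1)), mul_zero]
      · have hfx : ∀ x, f x y = 0 := by
          intro x
          simp only [hfdef, Set.indicator_apply, Set.mem_setOf_eq, hyB, false_and, if_false]
        simp only [hfx, lintegral_zero]
        by_cases hy1 : 1 < y
        · rw [Set.indicator_of_mem (Set.mem_Ioi.mpr hy1), hp, Set.indicator_of_notMem hyB]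
          simp
        · rw [Set.indicator_of_notMem (fun h => hy1 (Set.mem_Ioi.mp h))]
    rw [step1, step2, lintegral_congr step3, lintegral_indicator measurableSet_Ioi]
  · -- Part 2
    have himg : ∀ t : ℝ, Real.log '' B ∩ Set.Iio t = Real.log '' (B ∩ Set.Iio (Real.exp t)) := by
      intro t
      ext z
      constructor
      · rintro ⟨⟨y, hyB, rfl⟩, hz⟩
        exact ⟨y, ⟨hyB, (Real.log_lt_iff_lt_exp (hBsub hyB)).1 hz⟩, rfl⟩
      · rintro ⟨y, ⟨hyB, hy⟩, rfl⟩
        exact ⟨⟨y, hyB, rfl⟩, (Real.log_lt_iff_lt_exp (hBsub hyB)).2 hy⟩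
    set f : ℝ → ℝ → ℝ≥0∞ := fun x y =>
      Set.indicator {q : ℝ × ℝ | q.2 ∈ B ∧ q.2 < Real.exp q.1}
        (fun q => ENNReal.ofReal q.2⁻¹) (x, y) with hfdef
    have hset : MeasurableSet {q : ℝ × ℝ | q.2 ∈ B ∧ q.2 < Real.exp q.1} := by
      exact (measurable_snd hB).inter
        (measurableSet_lt measurable_snd (Real.continuous_exp.comp continuous_fst).measurable)
    have hFm : Measurable (Function.uncurry f) :=
      Measurable.indicator (measurable_snd.inv.ennreal_ofReal) hset
    have step1 : ∫⁻ x in Set.Iio (0:ℝ), volume ((Real.log '' B) ∩ Set.Iio x)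
        = ∫⁻ x in Set.Iio (0:ℝ), ∫⁻ y, f x y := by
      refine setLIntegral_congr_fun measurableSet_Iio
        (fun x _ => ?_)
      rw [himg x, log_image_volume (hB.inter measurableSet_Iio)
        ((Set.inter_subset_left).trans hBsub),
        ← lintegral_indicator (hB.inter measurableSet_Iio)]
      refine lintegral_congr fun y => ?_
      simp only [hfdef, Set.indicator_apply, Set.mem_setOf_eq, Set.mem_inter_iff, Set.mem_Iio]
    have step2 : ∫⁻ x in Set.Iio (0:ℝ), ∫⁻ y, f x y = ∫⁻ y, ∫⁻ x in Set.Iio (0:ℝ), f x y :=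
      lintegral_lintegral_swap hFm.aemeasurable
    have step3 : ∀ y : ℝ, (∫⁻ x in Set.Iio (0:ℝ), f x y)
        = (Set.Ioo (0:ℝ) 1).indicator (fun y => ENNReal.ofReal (p y * Real.log (p y))) y := by
      intro y
      by_cases hyB : y ∈ B
      · have hy0 : 0 < y := hBsub hyB
        have hfx : ∀ x, f x y = (Set.Ioi (Real.log y)).indicator
            (fun _ => ENNReal.ofReal y⁻¹) x := by
          intro x
          simp only [hfdef, Set.indicator_apply, Set.mem_setOf_eq, Set.mem_Ioi,
            ← Real.log_lt_iff_lt_exp hy0, hyB, true_and]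
        have hinner : (∫⁻ x in Set.Iio (0:ℝ), f x y)
            = ENNReal.ofReal y⁻¹ * ENNReal.ofReal (-Real.log y) := by
          simp only [hfx]
          rw [lintegral_indicator_const measurableSet_Ioi,
            Measure.restrict_apply measurableSet_Ioi, Set.Ioi_inter_Iio, Real.volume_Ioo,
            zero_sub]
        rw [hinner]
        by_cases hy1 : y < 1
        · rw [Set.indicator_of_mem (Set.mem_Ioo.mpr ⟨hy0, hy1⟩), hp, Set.indicator_of_mem hyB,
            Real.log_inv, ENNReal.ofReal_mul (inv_nonneg.mpr hy0.le)]
        · rw [Set.indicator_of_notMem (fun h => hy1 (Set.mem_Ioo.mp h).2),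
            ENNReal.ofReal_eq_zero.2 (neg_nonpos.mpr (Real.log_nonneg (not_lt.1 hy1))), mul_zero]
      · have hfx : ∀ x, f x y = 0 := by
          intro x
          simp only [hfdef, Set.indicator_apply, Set.mem_setOf_eq, hyB, false_and, if_false]
        simp only [hfx, lintegral_zero]
        by_cases hy1 : y ∈ Set.Ioo (0:ℝ) 1
        · rw [Set.indicator_of_mem hy1, hp, Set.indicator_of_notMem hyB]
          simp
        · rw [Set.indicator_of_notMem hy1]
    rw [step1, step2, lintegral_congr step3, lintegral_indicator measurableSet_Ioo]
end

section
/- For p(x) = (1/x)·𝟙_B(x) a probability density as above, with f defined from A = log B: if f is integrable on both ℝ⁻ and ℝ⁺ then the entropy S(p) = -∫ p·log p is finite and equals ∫_{-∞}^{∞} f(x) dx; if f is integrable on ℝ⁻ but not ℝ⁺ then S(p) = +∞; if integrable on ℝ⁺ but not ℝ⁻ then S(p) = -∞; if integrable on neither, S(p) does not exist. -/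
open MeasureTheory Real ENNReal

private lemma cov1d {s : Set ℝ} {f f' : ℝ → ℝ} (hs : MeasurableSet s)
    (hf' : ∀ x ∈ s, HasDerivWithinAt f (f' x) s x) (hf : Set.InjOn f s)
    (g : ℝ → ℝ≥0∞) :
    ∫⁻ x in f '' s, g x = ∫⁻ x in s, ENNReal.ofReal |f' x| * g (f x) := by
  simpa only [ContinuousLinearMap.det_toSpanSingleton] using
    lintegral_image_eq_lintegral_abs_det_fderiv_mul volume hs
      (fun x hx => (hf' x hx).hasFDerivWithinAt) hf g

private lemma lc_pos (A : Set ℝ) (hA : MeasurableSet A) :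
    ∫⁻ y in A, ENNReal.ofReal y = ∫⁻ t in Set.Ioi (0 : ℝ), volume (A ∩ Set.Ioi t) := by
  have h1 : ∫⁻ y in A, ENNReal.ofReal y = ∫⁻ y in A, ENNReal.ofReal (max y 0) := by
    refine lintegral_congr fun y => ?_
    rcases le_total 0 y with h | h
    · rw [max_eq_left h]
    · rw [max_eq_right h, ENNReal.ofReal_eq_zero.2 h, ENNReal.ofReal_zero]
  have h2 := lintegral_eq_lintegral_meas_lt (f := fun y : ℝ => max y 0) (volume.restrict A)
    (ae_of_all _ fun y => le_max_right _ _)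
    (Measurable.aemeasurable (by fun_prop))
  rw [h1, h2]
  refine setLIntegral_congr_fun measurableSet_Ioi (fun t ht => ?_)
  have hset : {a : ℝ | t < max a 0} = Set.Ioi t := by
    ext a
    simp only [Set.mem_setOf_eq, Set.mem_Ioi, lt_max_iff]
    have ht' : (0:ℝ) < t := ht
    exact ⟨fun h => h.elim id (fun h0 => absurd h0 (by linarith)), Or.inl⟩
  rw [hset, Measure.restrict_apply measurableSet_Ioi, Set.inter_comm]

private lemma lc_neg (A : Set ℝ) (hA : MeasurableSet A) :
    ∫⁻ y in A, ENNReal.ofReal (-y) = ∫⁻ t in Set.Ioi (0 : ℝ), volume (A ∩ Set.Iio (-t)) := by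
  have h1 : ∫⁻ y in A, ENNReal.ofReal (-y) = ∫⁻ y in A, ENNReal.ofReal (max (-y) 0) := by
    refine lintegral_congr fun y => ?_
    rcases le_total 0 (-y) with h | h
    · rw [max_eq_left h]
    · rw [max_eq_right h, ENNReal.ofReal_eq_zero.2 h, ENNReal.ofReal_zero]
  have h2 := lintegral_eq_lintegral_meas_lt (f := fun y : ℝ => max (-y) 0) (volume.restrict A)
    (ae_of_all _ fun y => le_max_right _ _)
    (Measurable.aemeasurable (by fun_prop))
  rw [h1, h2]
  refine setLIntegral_congr_fun measurableSet_Ioi (fun t ht => ?_)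
  have hset : {a : ℝ | t < max (-a) 0} = Set.Iio (-t) := by
    ext a
    simp only [Set.mem_setOf_eq, Set.mem_Iio, lt_max_iff]
    constructor
    · rintro (h | h0)
      · linarith
      · have ht' : (0:ℝ) < t := ht
        exact absurd h0 (by linarith)
    · intro h; left; linarith
  rw [hset, Measure.restrict_apply measurableSet_Iio, Set.inter_comm]

private lemma refl_neg (A : Set ℝ) :
    ∫⁻ x in Set.Iio (0 : ℝ), volume (A ∩ Set.Iio x)
      = ∫⁻ t in Set.Ioi (0 : ℝ), volume (A ∩ Set.Iio (-t)) := by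
  have hpre : (Neg.neg : ℝ → ℝ) ⁻¹' (Set.Iio (0 : ℝ)) = Set.Ioi (0 : ℝ) := by
    ext x; simp
  have := (Measure.measurePreserving_neg (volume : Measure ℝ)).setLIntegral_comp_preimage_emb
    (Homeomorph.neg ℝ).measurableEmbedding (fun x => volume (A ∩ Set.Iio x)) (Set.Iio (0 : ℝ))
  rw [hpre] at this
  exact this.symm

theorem entropy_trichotomy (B : Set ℝ) (p : ℝ → ℝ)
    (hB : MeasurableSet B) (hBsub : B ⊆ Set.Ioi (0 : ℝ))
    (hp : p = B.indicator fun x => x⁻¹)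
    (hdens : (∫⁻ x in B, ENNReal.ofReal x⁻¹) = 1) :
    let A := Real.log '' B
    let Fp := ∫⁻ x in Set.Ioi (0 : ℝ), volume (A ∩ Set.Ioi x)
    let Fm := ∫⁻ x in Set.Iio (0 : ℝ), volume (A ∩ Set.Iio x)
    (Fp ≠ ⊤ → Fm ≠ ⊤ →
      Integrable (fun x => p x * Real.log (p x)) ∧
      (-∫ x, p x * Real.log (p x)) = Fp.toReal - Fm.toReal) ∧
    (Fm ≠ ⊤ → Fp = ⊤ →
      (∫⁻ x, ENNReal.ofReal (-(p x * Real.log (p x)))) = ⊤ ∧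
      (∫⁻ x, ENNReal.ofReal (p x * Real.log (p x))) ≠ ⊤) ∧
    (Fp ≠ ⊤ → Fm = ⊤ →
      (∫⁻ x, ENNReal.ofReal (-(p x * Real.log (p x)))) ≠ ⊤ ∧
      (∫⁻ x, ENNReal.ofReal (p x * Real.log (p x))) = ⊤) ∧
    (Fp = ⊤ → Fm = ⊤ →
      (∫⁻ x, ENNReal.ofReal (-(p x * Real.log (p x)))) = ⊤ ∧
      (∫⁻ x, ENNReal.ofReal (p x * Real.log (p x))) = ⊤) := by
  intro A Fp Fm
  -- A is measurable
  have hAeq : A = Real.exp ⁻¹' B := by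
    ext y
    constructor
    · rintro ⟨b, hb, rfl⟩
      simpa [Real.exp_log (hBsub hb)] using hb
    · intro hy
      exact ⟨Real.exp y, hy, Real.log_exp y⟩
  have hmA : MeasurableSet A := by
    rw [hAeq]; exact hB.preimage Real.measurable_exp
  -- change of variables
  have hderiv : ∀ x ∈ B, HasDerivWithinAt Real.log x⁻¹ B x :=
    fun x hx => (Real.hasDerivAt_log (ne_of_gt (hBsub hx))).hasDerivWithinAt
  have hinj : Set.InjOn Real.log B := Real.log_injOn_pos.mono hBsub
  have hcv : ∀ g : ℝ → ℝ≥0∞,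
      ∫⁻ y in A, g y = ∫⁻ x in B, ENNReal.ofReal x⁻¹ * g (Real.log x) := by
    intro g
    have h := cov1d hB hderiv hinj g
    rw [show A = Real.log '' B from rfl, h]
    refine setLIntegral_congr_fun hB (fun x hx => ?_)
    rw [abs_of_nonneg (inv_nonneg.2 (le_of_lt (hBsub hx)))]
  -- pointwise identities for the integrand
  have hpt : ∀ x : ℝ, -(p x * Real.log (p x)) = B.indicator (fun x => x⁻¹ * Real.log x) x := by
    intro x
    by_cases hx : x ∈ B
    · have hx0 : (0 : ℝ) < x := hBsub hx
      rw [hp]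
      simp [Set.indicator_of_mem hx, Real.log_inv]
    · rw [hp]
      simp [Set.indicator_of_notMem hx]
  have hpos : (∫⁻ x, ENNReal.ofReal (-(p x * Real.log (p x)))) = Fp := by
    calc (∫⁻ x, ENNReal.ofReal (-(p x * Real.log (p x))))
        = ∫⁻ x, B.indicator (fun x => ENNReal.ofReal (x⁻¹ * Real.log x)) x := by
          refine lintegral_congr fun x => ?_
          rw [hpt x]
          by_cases hx : x ∈ B <;> simp [hx]
      _ = ∫⁻ x in B, ENNReal.ofReal (x⁻¹ * Real.log x) := lintegral_indicator hB _
      _ = ∫⁻ x in B, ENNReal.ofReal x⁻¹ * ENNReal.ofReal (Real.log x) := by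
          refine setLIntegral_congr_fun hB (fun x hx => ?_)
          exact ENNReal.ofReal_mul (inv_nonneg.2 (le_of_lt (hBsub hx)))
      _ = ∫⁻ y in A, ENNReal.ofReal y := (hcv (fun y => ENNReal.ofReal y)).symm
      _ = Fp := lc_pos A hmA
  have hneg : (∫⁻ x, ENNReal.ofReal (p x * Real.log (p x))) = Fm := by
    calc (∫⁻ x, ENNReal.ofReal (p x * Real.log (p x)))
        = ∫⁻ x, B.indicator (fun x => ENNReal.ofReal (x⁻¹ * (-Real.log x))) x := by
          refine lintegral_congr fun x => ?_
          have h := hpt x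
          have h2 : p x * Real.log (p x) = -(B.indicator (fun x => x⁻¹ * Real.log x) x) := by
            linarith [h]
          rw [h2]
          by_cases hx : x ∈ B <;> simp [hx, mul_neg]
      _ = ∫⁻ x in B, ENNReal.ofReal (x⁻¹ * (-Real.log x)) := lintegral_indicator hB _
      _ = ∫⁻ x in B, ENNReal.ofReal x⁻¹ * ENNReal.ofReal (-Real.log x) := by
          refine setLIntegral_congr_fun hB (fun x hx => ?_)
          exact ENNReal.ofReal_mul (inv_nonneg.2 (le_of_lt (hBsub hx)))
      _ = ∫⁻ y in A, ENNReal.ofReal (-y) := (hcv (fun y => ENNReal.ofReal (-y))).symm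
      _ = ∫⁻ t in Set.Ioi (0 : ℝ), volume (A ∩ Set.Iio (-t)) := lc_neg A hmA
      _ = Fm := (refl_neg A).symm
  -- measurability of the integrand
  have hmp : Measurable p := by
    rw [hp]; exact Measurable.indicator measurable_inv hB
  have hm : Measurable fun x => p x * Real.log (p x) :=
    hmp.mul (Real.measurable_log.comp hmp)
  refine ⟨?_, ?_, ?_, ?_⟩
  · intro hFp hFm
    have hint : Integrable (fun x => p x * Real.log (p x)) := by
      refine ⟨hm.aestronglyMeasurable, ?_⟩
      rw [hasFiniteIntegral_iff_norm]
      have heq : (∫⁻ x, ENNReal.ofReal ‖p x * Real.log (p x)‖)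
          = (∫⁻ x, ENNReal.ofReal (p x * Real.log (p x)))
            + ∫⁻ x, ENNReal.ofReal (-(p x * Real.log (p x))) := by
        rw [← lintegral_add_left (hm.ennreal_ofReal)]
        refine lintegral_congr fun x => ?_
        rw [Real.norm_eq_abs]
        rcases le_total 0 (p x * Real.log (p x)) with h | h
        · rw [abs_of_nonneg h, ENNReal.ofReal_eq_zero.2 (neg_nonpos.mpr h), add_zero]
        · rw [abs_of_nonpos h, ENNReal.ofReal_eq_zero.2 h, zero_add]
      rw [heq, hpos, hneg]
      exact ENNReal.add_lt_top.2 ⟨hFm.lt_top, hFp.lt_top⟩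
    refine ⟨hint, ?_⟩
    rw [integral_eq_lintegral_pos_part_sub_lintegral_neg_part hint, hneg]
    have : (∫⁻ a, ENNReal.ofReal (-(p a * Real.log (p a)))) = Fp := hpos
    rw [this]
    ring
  · intro h1 h2
    exact ⟨hpos.trans h2, by rw [hneg]; exact h1⟩
  · intro h1 h2
    exact ⟨by rw [hpos]; exact h1, hneg.trans h2⟩
  · intro h1 h2
    exact ⟨hpos.trans h1, hneg.trans h2⟩
end
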